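/- Let G be a finite graph on vertex set [N] with maximal degree Δ, let k < N, and define φ_k(G) = min over nonempty S ⊆ [N] with |S| ≤ k of |E(S,S^c)|/|S|. Let G' be the graph on [k+1] obtained from G by collapsing vertices k+1,...,N into a single vertex k+1 (keeping all edges, possibly with multiplicity). Then the second smallest eigenvalue λ_2 of the Laplacian of G' satisfies λ_2 ≥ φ_k(G)²/(2Δ). -/

import Mathlib

open Finset

lemma aux_split {N k : ℕ} (hk : k ≤ N) (ψ : Fin N → ℝ) :
    ∑ w, ψ w = (∑ i : Fin k, ψ (Fin.castLE hk i))
      + ∑ w ∈ Finset.univ.filter (fun w : Fin N => k ≤ (w : ℕ)), ψ w := by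
  classical
  have h1 := Finset.sum_filter_add_sum_filter_not Finset.univ
    (fun w : Fin N => (w : ℕ) < k) ψ
  have himg : Finset.univ.filter (fun w : Fin N => (w : ℕ) < k)
      = Finset.univ.image (Fin.castLE hk) := by
    ext w
    simp only [mem_filter, mem_univ, true_and, mem_image]
    constructor
    · intro hw; exact ⟨⟨w, hw⟩, by apply Fin.ext; rfl⟩
    · rintro ⟨i, -, rfl⟩; exact i.2
  have h2 : ∑ w ∈ Finset.univ.filter (fun w : Fin N => (w : ℕ) < k), ψ w
      = ∑ i : Fin k, ψ (Fin.castLE hk i) := by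
    rw [himg, Finset.sum_image]
    intro a _ b _ hab
    exact Fin.castLE_injective hk hab
  have h3 : Finset.univ.filter (fun w : Fin N => ¬ (w : ℕ) < k)
      = Finset.univ.filter (fun w : Fin N => k ≤ (w : ℕ)) := by
    apply Finset.filter_congr; intro w _; simp [not_lt]
  rw [← h1, h2, h3]

lemma aux_coarea {N k : ℕ} (A : Matrix (Fin N) (Fin N) ℝ) (hpos : ∀ u v, 0 ≤ A u v)
    (φ : ℝ) (hφ0 : 0 ≤ φ)
    (hiso : ∀ S : Finset (Fin N), S.Nonempty → S.card ≤ k →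
      φ * S.card ≤ ∑ u ∈ S, ∑ v ∈ Sᶜ, A u v) :
    ∀ (m : ℕ) (H : Fin N → ℝ), (∀ w, 0 ≤ H w) →
      (Finset.univ.filter fun w => H w ≠ 0).card ≤ k →
      (Finset.univ.filter fun w => H w ≠ 0).card ≤ m →
      φ * ∑ w, H w ≤ ∑ w, ∑ x, A w x * max (H w - H x) 0 := by
  intro m
  induction m with
  | zero =>
    intro H hH hk0 hm
    have hz : ∀ w, H w = 0 := by
      intro w
      by_contra hw
      have : w ∈ Finset.univ.filter fun w => H w ≠ 0 := by simp [hw]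
      have := Finset.card_pos.2 ⟨w, this⟩
      omega
    simp [hz]
  | succ m ih =>
    intro H hH hcard hm
    by_cases hzero : ∀ w, H w = 0
    · simp [hzero]
    set S := Finset.univ.filter (fun w => H w ≠ 0) with hSdef
    have hSne : S.Nonempty := by
      push_neg at hzero
      obtain ⟨w, hw⟩ := hzero
      exact ⟨w, by simp [hSdef, hw]⟩
    have hmemS : ∀ w, w ∈ S ↔ H w ≠ 0 := by intro w; simp [hSdef]
    have hposS : ∀ w ∈ S, 0 < H w := fun w hw =>
      lt_of_le_of_ne (hH w) (Ne.symm ((hmemS w).1 hw))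
    have hzeroS : ∀ w, w ∉ S → H w = 0 := by
      intro w hw
      by_contra h
      exact hw ((hmemS w).2 h)
    obtain ⟨w₀, hw₀S, hw₀min⟩ := Finset.exists_min_image S H hSne
    set t := H w₀ with htdef
    have ht : 0 < t := hposS _ hw₀S
    have hmin : ∀ w ∈ S, t ≤ H w := hw₀min
    set H' : Fin N → ℝ := fun w => if w ∈ S then H w - t else 0 with hH'def
    have hH'nonneg : ∀ w, 0 ≤ H' w := by
      intro w
      by_cases h : w ∈ S
      · simp only [hH'def, if_pos h]; linarith [hmin w h]
      · simp [hH'def, h]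
    have hH'w₀ : H' w₀ = 0 := by simp [hH'def, hw₀S, htdef]
    have hsubset : (Finset.univ.filter fun w => H' w ≠ 0) ⊆ S.erase w₀ := by
      intro w hw
      simp only [mem_filter, mem_univ, true_and] at hw
      have hwS : w ∈ S := by
        by_contra h
        exact hw (by simp [hH'def, h])
      refine Finset.mem_erase.2 ⟨?_, hwS⟩
      rintro rfl
      exact hw hH'w₀
    have hcard' : (Finset.univ.filter fun w => H' w ≠ 0).card ≤ S.card - 1 := by
      calc (Finset.univ.filter fun w => H' w ≠ 0).card ≤ (S.erase w₀).card :=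
            Finset.card_le_card hsubset
        _ = S.card - 1 := Finset.card_erase_of_mem hw₀S
    have hScard_pos : 1 ≤ S.card := Finset.card_pos.2 hSne
    have key : ∀ w x, max (H w - H x) 0
        = max (H' w - H' x) 0 + t * (if w ∈ S ∧ x ∉ S then 1 else 0) := by
      intro w x
      by_cases hw : w ∈ S <;> by_cases hx : x ∈ S
      · simp only [hH'def, if_pos hw, if_pos hx, hw, hx, not_true, and_false, if_false]
        ring_nf
      · have hx0 : H x = 0 := hzeroS x hx
        simp only [hH'def, if_pos hw, if_neg hx, hw, hx, not_false_iff, and_true, if_true, hx0]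
        rw [max_eq_left (by linarith [hposS w hw]), max_eq_left (by linarith [hmin w hw])]
        ring
      · have hw0 : H w = 0 := hzeroS w hw
        simp only [hH'def, if_neg hw, if_pos hx, hw, hx, false_and, if_false, hw0]
        rw [max_eq_right (by linarith [hposS x hx]), max_eq_right (by linarith [hmin x hx])]
        ring
      · have hw0 : H w = 0 := hzeroS w hw
        have hx0 : H x = 0 := hzeroS x hx
        simp [hH'def, hw, hx, hw0, hx0]
    have hsum_split : ∑ w, H w = (∑ w, H' w) + t * S.card := by
      have : ∀ w, H w = H' w + t * (if w ∈ S then 1 else 0) := by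
        intro w
        by_cases h : w ∈ S
        · simp [hH'def, h]
        · simp [hH'def, h, hzeroS w h]
      simp_rw [this, Finset.sum_add_distrib, ← Finset.mul_sum]
      congr 2
      simp [Finset.sum_ite_mem]
    have hcut : ∑ w, ∑ x, A w x * (t * (if w ∈ S ∧ x ∉ S then 1 else 0))
        = t * ∑ u ∈ S, ∑ v ∈ Sᶜ, A u v := by
      have hpt : ∀ w x, A w x * (t * (if w ∈ S ∧ x ∉ S then 1 else 0))
          = (if w ∈ S then (if x ∈ Sᶜ then t * A w x else 0) else 0) := by
        intro w x
        by_cases hw : w ∈ S <;> by_cases hx : x ∈ S <;>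
          simp [hw, hx, mul_comm]
      simp_rw [hpt]
      have hrow : ∀ w, (∑ x, if w ∈ S then (if x ∈ Sᶜ then t * A w x else 0) else 0)
          = if w ∈ S then (t * ∑ x ∈ Sᶜ, A w x) else 0 := by
        intro w
        by_cases hw : w ∈ S
        · simp only [if_pos hw]
          rw [Finset.sum_ite_mem, Finset.univ_inter, Finset.mul_sum]
        · simp [hw]
      simp_rw [hrow]
      rw [Finset.sum_ite_mem, Finset.univ_inter, Finset.mul_sum]
    have hihapp := ih H' hH'nonneg
      (le_trans (le_trans hcard' (Nat.sub_le _ _)) hcard)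
      (by omega)
    have hisoS := hiso S hSne hcard
    calc φ * ∑ w, H w = φ * ∑ w, H' w + t * (φ * S.card) := by
          rw [hsum_split]; ring
      _ ≤ (∑ w, ∑ x, A w x * max (H' w - H' x) 0) + t * ∑ u ∈ S, ∑ v ∈ Sᶜ, A u v := by
          gcongr
      _ = ∑ w, ∑ x, A w x * max (H w - H x) 0 := by
          rw [← hcut, ← Finset.sum_add_distrib]
          apply Finset.sum_congr rfl
          intro w _
          rw [← Finset.sum_add_distrib]
          apply Finset.sum_congr rfl
          intro x _
          rw [key w x]
          ring

lemma aux_transfer {N k : ℕ} (hk : k < N)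
    (A : Matrix (Fin N) (Fin N) ℝ)
    (A' : Matrix (Fin (k + 1)) (Fin (k + 1)) ℝ)
    (hA' : ∀ u v : Fin (k + 1), A' u v =
      if hu : (u : ℕ) < k then
        (if hv : (v : ℕ) < k then A ⟨u, hu.trans hk⟩ ⟨v, hv.trans hk⟩
         else ∑ w ∈ Finset.univ.filter (fun w : Fin N => k ≤ (w : ℕ)), A ⟨u, hu.trans hk⟩ w)
      else
        (if hv : (v : ℕ) < k then
          ∑ w ∈ Finset.univ.filter (fun w : Fin N => k ≤ (w : ℕ)), A w ⟨v, hv.trans hk⟩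
         else 0))
    (F : ℝ → ℝ → ℝ) (hF : F 0 0 = 0)
    (h : Fin (k + 1) → ℝ) (hlast : h (Fin.last k) = 0)
    (H : Fin N → ℝ)
    (hH : ∀ w : Fin N, H w = if hw : (w : ℕ) < k then h ⟨w, by omega⟩ else 0) :
    ∑ u, ∑ v, A' u v * F (h u) (h v) = ∑ w, ∑ x, A w x * F (H w) (H x) := by
  classical
  set T := Finset.univ.filter (fun w : Fin N => k ≤ (w : ℕ)) with hT
  have hc : ∀ i : Fin k, ((Fin.castSucc i : Fin (k+1)) : ℕ) < k := fun i => i.2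
  have hHc : ∀ i : Fin k, H (Fin.castLE hk.le i) = h (Fin.castSucc i) := by
    intro i
    rw [hH]
    rw [dif_pos (show ((Fin.castLE hk.le i : Fin N) : ℕ) < k from i.2)]
    congr 1
  have hHT : ∀ w ∈ T, H w = 0 := by
    intro w hw
    rw [hH, dif_neg]
    simp only [hT, mem_filter] at hw
    omega
  have hlastval : ((Fin.last k : Fin (k+1)) : ℕ) = k := rfl
  -- expand LHS
  rw [Fin.sum_univ_castSucc]
  have hinner : ∀ i : Fin k,
      ∑ v, A' (Fin.castSucc i) v * F (h (Fin.castSucc i)) (h v)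
      = (∑ j : Fin k, A (Fin.castLE hk.le i) (Fin.castLE hk.le j)
            * F (h (Fin.castSucc i)) (h (Fin.castSucc j)))
        + (∑ x ∈ T, A (Fin.castLE hk.le i) x) * F (h (Fin.castSucc i)) 0 := by
    intro i
    rw [Fin.sum_univ_castSucc]
    congr 1
    · apply Finset.sum_congr rfl
      intro j _
      rw [hA']
      rw [dif_pos (hc i), dif_pos (hc j)]
      congr 1
    · rw [hA', dif_pos (hc i), dif_neg (by simp [hlastval]), hlast]
      rfl
  have hlastrow : ∑ v, A' (Fin.last k) v * F (h (Fin.last k)) (h v)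
      = ∑ j : Fin k, (∑ w ∈ T, A w (Fin.castLE hk.le j)) * F 0 (h (Fin.castSucc j)) := by
    rw [Fin.sum_univ_castSucc]
    have h1 : A' (Fin.last k) (Fin.last k) = 0 := by
      rw [hA', dif_neg (by simp [hlastval]), dif_neg (by simp [hlastval])]
    rw [h1, zero_mul, add_zero]
    apply Finset.sum_congr rfl
    intro j _
    rw [hA', dif_neg (by simp [hlastval]), dif_pos (hc j), hlast]
    rfl
  simp_rw [hinner, hlastrow]
  -- expand RHS
  rw [aux_split hk.le]
  have hrhsrow : ∀ i : Fin k,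
      ∑ x, A (Fin.castLE hk.le i) x * F (H (Fin.castLE hk.le i)) (H x)
      = (∑ j : Fin k, A (Fin.castLE hk.le i) (Fin.castLE hk.le j)
            * F (h (Fin.castSucc i)) (h (Fin.castSucc j)))
        + (∑ x ∈ T, A (Fin.castLE hk.le i) x) * F (h (Fin.castSucc i)) 0 := by
    intro i
    rw [aux_split hk.le]
    congr 1
    · apply Finset.sum_congr rfl
      intro j _
      rw [hHc, hHc]
    · rw [Finset.sum_mul]
      apply Finset.sum_congr rfl
      intro x hx
      rw [hHc, hHT x hx]
  have hrhsT : ∑ w ∈ T, ∑ x, A w x * F (H w) (H x)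
      = ∑ w ∈ T, ∑ j : Fin k, A w (Fin.castLE hk.le j) * F 0 (h (Fin.castSucc j)) := by
    apply Finset.sum_congr rfl
    intro w hw
    rw [aux_split hk.le]
    have : ∑ x ∈ T, A w x * F (H w) (H x) = 0 := by
      apply Finset.sum_eq_zero
      intro x hx
      rw [hHT w hw, hHT x hx, hF, mul_zero]
    rw [this, add_zero]
    apply Finset.sum_congr rfl
    intro j _
    rw [hHc, hHT w hw]
  rw [hrhsT]
  simp_rw [hrhsrow]
  rw [Finset.sum_comm (s := T)]
  congr 1
  apply Finset.sum_congr rfl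
  intro j _
  rw [Finset.sum_mul]

lemma aux_quad {n : ℕ} (B : Matrix (Fin n) (Fin n) ℝ) (g p : Fin n → ℝ) :
    ∑ u, g u * ((Matrix.diagonal (fun v => ∑ x, B v x) - B).mulVec p u)
      = (∑ u, (∑ x, B u x) * (g u * p u)) - ∑ u, ∑ v, B u v * (g u * p v) := by
  rw [← Finset.sum_sub_distrib]
  apply Finset.sum_congr rfl
  intro u _
  rw [Matrix.sub_mulVec, Pi.sub_apply, Matrix.mulVec_diagonal]
  have : (B.mulVec p) u = ∑ v, B u v * p v := rfl
  rw [this, mul_sub, Finset.mul_sum]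
  congr 1
  · ring
  · apply Finset.sum_congr rfl; intro v _; ring

lemma aux_dirichlet {n : ℕ} (B : Matrix (Fin n) (Fin n) ℝ)
    (hsym : ∀ u v, B u v = B v u) (g : Fin n → ℝ) :
    ∑ u, ∑ v, B u v * (g u - g v) ^ 2
      = 2 * ∑ u, g u * ((Matrix.diagonal (fun v => ∑ x, B v x) - B).mulVec g u) := by
  rw [aux_quad]
  have swap : ∑ u, ∑ v, B u v * (g v)^2 = ∑ u, ∑ v, B u v * (g u)^2 := by
    rw [Finset.sum_comm]
    apply Finset.sum_congr rfl
    intro u _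
    apply Finset.sum_congr rfl
    intro v _
    rw [hsym]
  have expand : ∑ u, ∑ v, B u v * (g u - g v) ^ 2
      = (∑ u, ∑ v, B u v * (g u)^2) + (∑ u, ∑ v, B u v * (g v)^2)
        - 2 * ∑ u, ∑ v, B u v * (g u * g v) := by
    rw [Finset.mul_sum, ← Finset.sum_add_distrib, ← Finset.sum_sub_distrib]
    apply Finset.sum_congr rfl
    intro u _
    rw [Finset.mul_sum, ← Finset.sum_add_distrib, ← Finset.sum_sub_distrib]
    apply Finset.sum_congr rfl
    intro v _
    ring
  have rowsum : ∑ u, (∑ x, B u x) * (g u * g u) = ∑ u, ∑ v, B u v * (g u)^2 := by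
    apply Finset.sum_congr rfl
    intro u _
    rw [Finset.sum_mul]
    apply Finset.sum_congr rfl
    intro v _
    ring
  rw [expand, swap, rowsum]
  ring

set_option maxHeartbeats 1000000 in
/-- Collapsing preserves the Cheeger bound: let `A` be the (symmetric, nonnegative)
adjacency matrix of a graph on `[N]` with maximal degree `Δ`, `k < N`, and let `φ ≥ 0`
be such that `φ |S| ≤ |E(S, Sᶜ)|` for every nonempty `S` with `|S| ≤ k` (so in particular
this holds for `φ = φ_k(G)`).  Let `A'` be the adjacency matrix on `[k+1]` obtained by
collapsing vertices `k+1, ..., N` into a single vertex, and `L'` its Laplacian.  Then every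
eigenvalue `lam` of `L'` with an eigenvector orthogonal to the constants satisfies
`lam ≥ φ² / (2Δ)`; i.e. the spectral gap `λ₂` of `L'` is at least `φ_k(G)² / (2Δ)`. -/
theorem stmt_5 (N k : ℕ) (hk : k < N)
    (A : Matrix (Fin N) (Fin N) ℝ) (hsymm : A.IsSymm) (hpos : ∀ u v, 0 ≤ A u v)
    (Δ : ℝ) (hΔ : ∀ v, ∑ u, A v u ≤ Δ)
    (φ : ℝ) (hφ0 : 0 ≤ φ)
    (hiso : ∀ S : Finset (Fin N), S.Nonempty → S.card ≤ k →
      φ * S.card ≤ ∑ u ∈ S, ∑ v ∈ Sᶜ, A u v)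
    (A' : Matrix (Fin (k + 1)) (Fin (k + 1)) ℝ)
    (hA' : ∀ u v : Fin (k + 1), A' u v =
      if hu : (u : ℕ) < k then
        (if hv : (v : ℕ) < k then A ⟨u, by omega⟩ ⟨v, by omega⟩
         else ∑ w ∈ Finset.univ.filter (fun w : Fin N => k ≤ (w : ℕ)), A ⟨u, by omega⟩ w)
      else
        (if hv : (v : ℕ) < k then
          ∑ w ∈ Finset.univ.filter (fun w : Fin N => k ≤ (w : ℕ)), A w ⟨v, by omega⟩
         else 0))
    (L' : Matrix (Fin (k + 1)) (Fin (k + 1)) ℝ)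
    (hL' : L' = Matrix.diagonal (fun v => ∑ u, A' v u) - A')
    (lam : ℝ) (f : Fin (k + 1) → ℝ) (hf : f ≠ 0) (hortho : ∑ i, f i = 0)
    (heig : L'.mulVec f = lam • f) :
    φ ^ 2 / (2 * Δ) ≤ lam := by
  classical
  have hsymA : ∀ u v, A u v = A v u := fun u v => (congrFun (congrFun hsymm v) u)
  have hA'pos : ∀ u v, 0 ≤ A' u v := by
    intro u v
    rw [hA']
    split_ifs
    · exact hpos _ _
    · exact Finset.sum_nonneg fun _ _ => hpos _ _
    · exact Finset.sum_nonneg fun _ _ => hpos _ _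
    · exact le_refl 0
  have hA'sym : ∀ u v, A' u v = A' v u := by
    intro u v
    rw [hA', hA']
    by_cases hu : (u : ℕ) < k <;> by_cases hv : (v : ℕ) < k
    · rw [dif_pos hu, dif_pos hv, dif_pos hv, dif_pos hu]
      exact hsymA _ _
    · rw [dif_pos hu, dif_neg hv, dif_neg hv, dif_pos hu]
      exact Finset.sum_congr rfl fun w _ => hsymA _ _
    · rw [dif_neg hu, dif_pos hv, dif_pos hv, dif_neg hu]
      exact Finset.sum_congr rfl fun w _ => hsymA _ _
    · rw [dif_neg hu, dif_neg hv, dif_neg hv, dif_neg hu]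
  suffices key : ∀ f : Fin (k+1) → ℝ, f ≠ 0 → ∑ i, f i = 0 →
      L'.mulVec f = lam • f → f (Fin.last k) ≤ 0 → φ ^ 2 / (2 * Δ) ≤ lam by
    by_cases hlast : f (Fin.last k) ≤ 0
    · exact key f hf hortho heig hlast
    · refine key (-f) (neg_ne_zero.2 hf) (by simp [hortho]) ?_ (by simp; linarith)
      rw [Matrix.mulVec_neg, heig]
      ext u
      simp
  clear hf hortho heig
  intro f hf hortho heig hflast
  have heig' : ∀ u, L'.mulVec f u = lam * f u := fun u => congrFun heig u
  have hsumf2 : 0 < ∑ u, f u ^ 2 := by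
    have hex : ∃ u, f u ≠ 0 := by
      by_contra hcon
      push_neg at hcon
      exact hf (funext hcon)
    obtain ⟨u, hu⟩ := hex
    have h1 : 0 < f u ^ 2 := by positivity
    exact lt_of_lt_of_le h1
      (Finset.single_le_sum (fun v _ => sq_nonneg (f v)) (mem_univ u))
  have hflf : ∑ u, f u * (L'.mulVec f u) = lam * ∑ u, f u ^ 2 := by
    rw [Finset.mul_sum]
    apply Finset.sum_congr rfl
    intro u _
    rw [heig' u]
    ring
  have hdirf : ∑ u, ∑ v, A' u v * (f u - f v) ^ 2 = 2 * (lam * ∑ u, f u ^ 2) := by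
    rw [aux_dirichlet A' hA'sym f, ← hL', hflf]
  have hlam0 : 0 ≤ lam := by
    have hR0 : 0 ≤ ∑ u, ∑ v, A' u v * (f u - f v) ^ 2 :=
      Finset.sum_nonneg fun u _ => Finset.sum_nonneg fun v _ =>
        mul_nonneg (hA'pos u v) (sq_nonneg _)
    nlinarith
  rcases le_or_gt Δ 0 with hΔ0 | hΔpos
  · calc φ ^ 2 / (2 * Δ) ≤ 0 :=
          div_nonpos_iff.2 (Or.inl ⟨sq_nonneg φ, by linarith⟩)
      _ ≤ lam := hlam0
  -- main case Δ > 0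
  set g : Fin (k+1) → ℝ := fun u => max (f u) 0 with hgdef
  have hg0 : ∀ u, 0 ≤ g u := fun u => le_max_right _ _
  have hglast : g (Fin.last k) = 0 := max_eq_right hflast
  have hgf : ∀ u, g u * f u = g u * g u := by
    intro u
    rcases le_or_gt (f u) 0 with h | h
    · simp [hgdef, max_eq_right h]
    · simp [hgdef, max_eq_left h.le]
  have hfg : ∀ u, f u ≤ g u := fun u => le_max_left _ _
  have hexpos : ∃ u, 0 < f u := by
    by_contra hcon
    push_neg at hcon
    have hnn : ∀ u ∈ (univ : Finset (Fin (k+1))), 0 ≤ -f u := fun u _ => by linarith [hcon u]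
    have hzero : ∑ u, -f u = 0 := by simp [hortho]
    have := (Finset.sum_eq_zero_iff_of_nonneg hnn).1 hzero
    apply hf
    funext u
    have h := this u (mem_univ u)
    show f u = 0
    linarith
  obtain ⟨u₀, hu₀⟩ := hexpos
  set s := ∑ u, g u ^ 2 with hsdef
  have hspos : 0 < s := by
    have h1 : 0 < g u₀ ^ 2 := by
      have : g u₀ = f u₀ := max_eq_left hu₀.le
      rw [this]; positivity
    exact lt_of_lt_of_le h1
      (Finset.single_le_sum (fun v _ => sq_nonneg (g v)) (mem_univ u₀))
  have hgLf : ∑ u, g u * (L'.mulVec f u) = lam * s := by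
    rw [hsdef, Finset.mul_sum]
    apply Finset.sum_congr rfl
    intro u _
    rw [heig' u]
    calc g u * (lam * f u) = lam * (g u * f u) := by ring
      _ = lam * g u ^ 2 := by rw [hgf u]; ring
  have hgLg_le : ∑ u, g u * (L'.mulVec g u) ≤ lam * s := by
    rw [← hgLf, hL', aux_quad, aux_quad]
    have e1 : ∑ u, (∑ x, A' u x) * (g u * f u) = ∑ u, (∑ x, A' u x) * (g u * g u) := by
      apply Finset.sum_congr rfl
      intro u _
      rw [hgf u]
    rw [e1]
    have e2 : ∑ u, ∑ v, A' u v * (g u * f v) ≤ ∑ u, ∑ v, A' u v * (g u * g v) := by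
      apply Finset.sum_le_sum
      intro u _
      apply Finset.sum_le_sum
      intro v _
      have hmul := mul_le_mul_of_nonneg_left (hfg v) (mul_nonneg (hA'pos u v) (hg0 u))
      calc A' u v * (g u * f v) = (A' u v * g u) * f v := by ring
        _ ≤ (A' u v * g u) * g v := hmul
        _ = A' u v * (g u * g v) := by ring
    linarith
  have hR : ∑ u, ∑ v, A' u v * (g u - g v) ^ 2 ≤ 2 * (lam * s) := by
    rw [aux_dirichlet A' hA'sym g, ← hL']
    linarith
  have hR0 : 0 ≤ ∑ u, ∑ v, A' u v * (g u - g v) ^ 2 :=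
    Finset.sum_nonneg fun u _ => Finset.sum_nonneg fun v _ =>
      mul_nonneg (hA'pos u v) (sq_nonneg _)
  -- coarea
  set H : Fin N → ℝ := fun w => if hw : (w : ℕ) < k then g ⟨w, by omega⟩ ^ 2 else 0 with hHdef
  have hHnn : ∀ w, 0 ≤ H w := by
    intro w
    simp only [hHdef]
    split_ifs
    · exact sq_nonneg _
    · exact le_refl 0
  have hsupp : (univ.filter fun w => H w ≠ 0).card ≤ k := by
    have hsub : (univ.filter fun w => H w ≠ 0) ⊆ univ.filter fun w : Fin N => (w : ℕ) < k := by
      intro w hw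
      simp only [mem_filter, mem_univ, true_and] at hw ⊢
      by_contra h
      exact hw (by simp [hHdef, h])
    have hcardlt : (univ.filter fun w : Fin N => (w : ℕ) < k).card ≤ k := by
      have h := Finset.card_le_card_of_injOn (t := Finset.range k)
        (s := univ.filter fun w : Fin N => (w : ℕ) < k)
        (fun w : Fin N => (w : ℕ))
        (fun w hw => by
          simp only [coe_filter, mem_filter, mem_univ, true_and, Set.mem_setOf_eq] at hw
          exact Finset.mem_range.2 hw)
        (fun a _ b _ h => Fin.val_injective h)
      rwa [Finset.card_range] at h
    exact le_trans (Finset.card_le_card hsub) hcardlt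
  have hsumH : ∑ w, H w = s := by
    rw [aux_split hk.le]
    have h2 : ∑ w ∈ univ.filter (fun w : Fin N => k ≤ (w : ℕ)), H w = 0 := by
      apply Finset.sum_eq_zero
      intro w hw
      simp only [mem_filter, mem_univ, true_and] at hw
      simp only [hHdef]
      rw [dif_neg (by omega)]
    rw [h2, add_zero, hsdef, Fin.sum_univ_castSucc (f := fun u => g u ^ 2)]
    have h3 : g (Fin.last k) ^ 2 = 0 := by rw [hglast]; ring
    rw [h3, add_zero]
    apply Finset.sum_congr rfl
    intro i _
    simp only [hHdef]
    rw [dif_pos (show ((Fin.castLE hk.le i : Fin N) : ℕ) < k from i.2)]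
    rfl
  have hcoarea : φ * s ≤ ∑ u, ∑ v, A' u v * max (g u ^ 2 - g v ^ 2) 0 := by
    have hco := aux_coarea A hpos φ hφ0 hiso
      ((univ.filter fun w => H w ≠ 0).card) H hHnn hsupp le_rfl
    rw [hsumH] at hco
    rw [aux_transfer hk A A' hA' (fun a b => max (a - b) 0) (by simp)
      (fun u => g u ^ 2) (by show g (Fin.last k) ^ 2 = 0; rw [hglast]; ring) H (fun w => rfl)]
    exact hco
  -- symmetrize
  have habs : ∑ u, ∑ v, A' u v * |g u ^ 2 - g v ^ 2|
      = 2 * ∑ u, ∑ v, A' u v * max (g u ^ 2 - g v ^ 2) 0 := by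
    have hswap : ∑ u, ∑ v, A' u v * max (g v ^ 2 - g u ^ 2) 0
        = ∑ u, ∑ v, A' u v * max (g u ^ 2 - g v ^ 2) 0 := by
      rw [Finset.sum_comm]
      apply Finset.sum_congr rfl
      intro u _
      apply Finset.sum_congr rfl
      intro v _
      rw [hA'sym]
    have hpt : ∀ u v, A' u v * |g u ^ 2 - g v ^ 2|
        = A' u v * max (g u ^ 2 - g v ^ 2) 0 + A' u v * max (g v ^ 2 - g u ^ 2) 0 := by
      intro u v
      rcases le_total (g u ^ 2) (g v ^ 2) with h | h
      · rw [abs_of_nonpos (by linarith), max_eq_right (by linarith),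
          max_eq_left (by linarith)]
        ring
      · rw [abs_of_nonneg (by linarith), max_eq_left (by linarith),
          max_eq_right (by linarith)]
        ring
    calc ∑ u, ∑ v, A' u v * |g u ^ 2 - g v ^ 2|
        = (∑ u, ∑ v, A' u v * max (g u ^ 2 - g v ^ 2) 0)
          + ∑ u, ∑ v, A' u v * max (g v ^ 2 - g u ^ 2) 0 := by
          rw [← Finset.sum_add_distrib]
          apply Finset.sum_congr rfl
          intro u _
          rw [← Finset.sum_add_distrib]
          apply Finset.sum_congr rfl
          intro v _
          exact hpt u v
      _ = 2 * ∑ u, ∑ v, A' u v * max (g u ^ 2 - g v ^ 2) 0 := by rw [hswap]; ring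
  -- Cauchy-Schwarz
  have hCS : (∑ u, ∑ v, A' u v * |g u ^ 2 - g v ^ 2|) ^ 2
      ≤ (∑ u, ∑ v, A' u v * (g u - g v) ^ 2) * (∑ u, ∑ v, A' u v * (g u + g v) ^ 2) := by
    have keyCS := Finset.sum_mul_sq_le_sq_mul_sq Finset.univ
      (fun p : Fin (k+1) × Fin (k+1) => Real.sqrt (A' p.1 p.2) * |g p.1 - g p.2|)
      (fun p : Fin (k+1) × Fin (k+1) => Real.sqrt (A' p.1 p.2) * (g p.1 + g p.2))
    have c1 : ∑ p : Fin (k+1) × Fin (k+1),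
        (Real.sqrt (A' p.1 p.2) * |g p.1 - g p.2|)
          * (Real.sqrt (A' p.1 p.2) * (g p.1 + g p.2))
        = ∑ u, ∑ v, A' u v * |g u ^ 2 - g v ^ 2| := by
      rw [Fintype.sum_prod_type]
      apply Finset.sum_congr rfl
      intro u _
      apply Finset.sum_congr rfl
      intro v _
      have h1 : Real.sqrt (A' u v) * Real.sqrt (A' u v) = A' u v :=
        Real.mul_self_sqrt (hA'pos u v)
      have h2 : |g u - g v| * (g u + g v) = |g u ^ 2 - g v ^ 2| := by
        rw [← abs_of_nonneg (add_nonneg (hg0 u) (hg0 v)), ← abs_mul]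
        congr 1
        ring
      calc (Real.sqrt (A' u v) * |g u - g v|) * (Real.sqrt (A' u v) * (g u + g v))
          = (Real.sqrt (A' u v) * Real.sqrt (A' u v)) * (|g u - g v| * (g u + g v)) := by
            ring
        _ = A' u v * |g u ^ 2 - g v ^ 2| := by rw [h1, h2]
    have c2 : ∑ p : Fin (k+1) × Fin (k+1),
        (Real.sqrt (A' p.1 p.2) * |g p.1 - g p.2|) ^ 2
        = ∑ u, ∑ v, A' u v * (g u - g v) ^ 2 := by
      rw [Fintype.sum_prod_type]
      apply Finset.sum_congr rfl
      intro u _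
      apply Finset.sum_congr rfl
      intro v _
      rw [mul_pow, Real.sq_sqrt (hA'pos u v), sq_abs]
    have c3 : ∑ p : Fin (k+1) × Fin (k+1),
        (Real.sqrt (A' p.1 p.2) * (g p.1 + g p.2)) ^ 2
        = ∑ u, ∑ v, A' u v * (g u + g v) ^ 2 := by
      rw [Fintype.sum_prod_type]
      apply Finset.sum_congr rfl
      intro u _
      apply Finset.sum_congr rfl
      intro v _
      rw [mul_pow, Real.sq_sqrt (hA'pos u v)]
    rw [c1, c2, c3] at keyCS
    exact keyCS
  -- bound the (g u + g v)^2 sum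
  set G : Fin N → ℝ := fun w => if hw : (w : ℕ) < k then g ⟨w, by omega⟩ else 0 with hGdef
  have hTle : ∑ u, ∑ v, A' u v * (g u + g v) ^ 2 ≤ 4 * (Δ * s) := by
    have htrans := aux_transfer hk A A' hA' (fun a b => (a + b) ^ 2) (by norm_num)
      g hglast G (fun w => rfl)
    rw [htrans]
    have hGsq : ∀ w, G w ^ 2 = H w := by
      intro w
      simp only [hGdef, hHdef]
      split_ifs
      · rfl
      · ring
    have hGsum : ∑ w, G w ^ 2 = s := by
      rw [Finset.sum_congr rfl fun w _ => hGsq w, hsumH]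
    have step1 : ∑ w, ∑ x, A w x * (G w + G x) ^ 2
        ≤ ∑ w, ∑ x, (2 * (A w x * G w ^ 2) + 2 * (A w x * G x ^ 2)) := by
      apply Finset.sum_le_sum
      intro w _
      apply Finset.sum_le_sum
      intro x _
      have h1 : (G w + G x) ^ 2 ≤ 2 * G w ^ 2 + 2 * G x ^ 2 := by
        nlinarith [sq_nonneg (G w - G x)]
      nlinarith [mul_le_mul_of_nonneg_left h1 (hpos w x)]
    have step2 : ∑ w, ∑ x, (2 * (A w x * G w ^ 2) + 2 * (A w x * G x ^ 2))
        = 2 * (∑ w, (∑ x, A w x) * G w ^ 2) + 2 * (∑ x, (∑ w, A w x) * G x ^ 2) := by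
      have e1 : ∀ w, ∑ x, (2 * (A w x * G w ^ 2) + 2 * (A w x * G x ^ 2))
          = 2 * ((∑ x, A w x) * G w ^ 2) + ∑ x, 2 * (A w x * G x ^ 2) := by
        intro w
        rw [Finset.sum_add_distrib]
        congr 1
        rw [Finset.sum_mul, Finset.mul_sum]
      simp_rw [e1]
      rw [Finset.sum_add_distrib]
      congr 1
      · rw [Finset.mul_sum]
      · rw [Finset.sum_comm, Finset.mul_sum]
        apply Finset.sum_congr rfl
        intro x _
        rw [Finset.sum_mul, Finset.mul_sum]
    have step3 : ∑ w, (∑ x, A w x) * G w ^ 2 ≤ Δ * s := by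
      calc ∑ w, (∑ x, A w x) * G w ^ 2 ≤ ∑ w, Δ * G w ^ 2 := by
            apply Finset.sum_le_sum
            intro w _
            exact mul_le_mul_of_nonneg_right (hΔ w) (sq_nonneg _)
        _ = Δ * s := by rw [← Finset.mul_sum, hGsum]
    have step4 : ∑ x, (∑ w, A w x) * G x ^ 2 ≤ Δ * s := by
      calc ∑ x, (∑ w, A w x) * G x ^ 2 ≤ ∑ x, Δ * G x ^ 2 := by
            apply Finset.sum_le_sum
            intro x _
            refine mul_le_mul_of_nonneg_right ?_ (sq_nonneg _)
            calc ∑ w, A w x = ∑ w, A x w :=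
                  Finset.sum_congr rfl fun w _ => hsymA w x
              _ ≤ Δ := hΔ x
        _ = Δ * s := by rw [← Finset.mul_sum, hGsum]
    linarith
  have hT0 : 0 ≤ ∑ u, ∑ v, A' u v * (g u + g v) ^ 2 :=
    Finset.sum_nonneg fun u _ => Finset.sum_nonneg fun v _ =>
      mul_nonneg (hA'pos u v) (sq_nonneg _)
  -- put everything together
  have hQge : 2 * (φ * s) ≤ ∑ u, ∑ v, A' u v * |g u ^ 2 - g v ^ 2| := by
    rw [habs]
    linarith
  have hQ2 : (2 * (φ * s)) ^ 2 ≤ (∑ u, ∑ v, A' u v * |g u ^ 2 - g v ^ 2|) ^ 2 := by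
    apply pow_le_pow_left₀ (by positivity) hQge
  have hRT : (∑ u, ∑ v, A' u v * (g u - g v) ^ 2) * (∑ u, ∑ v, A' u v * (g u + g v) ^ 2)
      ≤ (2 * (lam * s)) * (4 * (Δ * s)) := by
    apply mul_le_mul hR hTle hT0
    positivity
  have hfinal : 4 * (φ * s) ^ 2 ≤ 8 * (lam * Δ * s ^ 2) := by nlinarith
  rw [div_le_iff₀ (by linarith)]
  nlinarith [mul_pos hspos hspos]
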